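/- Define the bounded linear operator T on the Hilbert space L²(0,1) by (Tf)(x) = ∫₀ˣ (1 − e^{t−x}) f(t) dt − (1/2)∫₀¹ f(t) dt + (e^{1−x}/(1+e)) ∫₀¹ e^{t−1} f(t) dt. Then T is a normal operator: T T* = T* T. -/

import Mathlib

open MeasureTheory

namespace StmtAux16

open Complex Set Real

noncomputable section


abbrev μ01 : Measure ℝ := volume.restrict (Set.Ioo (0:ℝ) 1)

instance : IsFiniteMeasure μ01 := by
  constructor
  rw [Measure.restrict_apply_univ, Real.volume_Ioo]
  exact ENNReal.ofReal_lt_top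

def lam (k : ℤ) : ℂ := ((Real.pi * (2*k+1) : ℝ) : ℂ) * Complex.I

lemma exp_lam (k : ℤ) : Complex.exp (lam k) = -1 := by
  have : lam k = (k : ℂ) * (2 * Real.pi * Complex.I) + Real.pi * Complex.I := by
    unfold lam; push_cast; ring
  rw [this, Complex.exp_add, Complex.exp_int_mul_two_pi_mul_I, Complex.exp_pi_mul_I, one_mul]

lemma lam_ne_zero (k : ℤ) : lam k ≠ 0 := by
  have h1 : (2*(k:ℝ)+1) ≠ 0 := by
    have : (2*k+1 : ℤ) ≠ 0 := by omega
    exact_mod_cast fun h => this (by exact_mod_cast h)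
  simp only [lam, mul_ne_zero_iff, Complex.ofReal_ne_zero]
  exact ⟨⟨Real.pi_ne_zero, h1⟩, Complex.I_ne_zero⟩

lemma one_add_lam_ne_zero (k : ℤ) : 1 + lam k ≠ 0 := by
  intro h
  apply_fun Complex.re at h
  simp [lam] at h

lemma lam_re (k : ℤ) : (lam k).re = 0 := by simp [lam]

def mu (k : ℤ) : ℂ := 1 / (lam k ^ 2 + lam k)

lemma ek_memℒp (k : ℤ) : MemLp (fun x : ℝ => Complex.exp (lam k * x)) 2 μ01 := by
  refine MemLp.of_bound ?_ 1 ?_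
  · exact (Complex.continuous_exp.comp (continuous_const.mul Complex.continuous_ofReal)).aestronglyMeasurable
  · refine Filter.Eventually.of_forall (fun x => ?_)
    rw [Complex.norm_exp]
    simp [lam]

def eL (k : ℤ) : Lp ℂ 2 μ01 := (ek_memℒp k).toLp _



lemma totality {g : Lp ℂ 2 μ01}
    (h : ∀ k : ℤ, ∫ x in Set.Ioo (0:ℝ) 1, Complex.exp (-(lam k) * x) * (g : ℝ → ℂ) x = 0) :
    g = 0 := by
  haveI : Fact (0 < (1:ℝ)) := ⟨one_pos⟩
  set u : ℝ → ℂ := fun x => Complex.exp (-(Real.pi:ℂ) * Complex.I * x) * (g : ℝ → ℂ) x with hu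
  have husm : StronglyMeasurable u :=
    ((Complex.continuous_exp.comp ((continuous_const).mul Complex.continuous_ofReal)).stronglyMeasurable).mul
      (Lp.stronglyMeasurable g)
  have hres : μ01 = volume.restrict (Set.Ioc (0:ℝ) 1) := Measure.restrict_congr_set Ioo_ae_eq_Ioc
  have hnorm : ∀ x : ℝ, ‖u x‖ = ‖(g : ℝ → ℂ) x‖ := by
    intro x
    rw [hu]
    simp only [norm_mul, Complex.norm_exp]
    norm_num
  have humem : MemLp u 2 (volume.restrict (Set.Ioc (0:ℝ) 1)) := by
    refine ⟨husm.aestronglyMeasurable, ?_⟩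
    rw [← hres]
    calc eLpNorm u 2 μ01 = eLpNorm (g : ℝ → ℂ) 2 μ01 :=
          eLpNorm_congr_norm_ae (Filter.Eventually.of_forall hnorm)
      _ < ⊤ := (Lp.memLp g).2
  set G : AddCircle (1:ℝ) → ℂ := AddCircle.liftIoc 1 0 u with hG
  have hGsm : StronglyMeasurable G := by
    apply husm.comp_measurable
    exact measurable_subtype_coe.comp (AddCircle.measurableEquivIoc (1:ℝ) 0).measurable
  have hmp : MeasurePreserving ((↑) : ℝ → AddCircle (1:ℝ))
      (volume.restrict (Set.Ioc (0:ℝ) (0+1))) volume := AddCircle.measurePreserving_mk 1 0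
  have hGcomp : (fun x : ℝ => G (x : AddCircle (1:ℝ)))
      =ᵐ[volume.restrict (Set.Ioc (0:ℝ) 1)] u := by
    filter_upwards [ae_restrict_mem measurableSet_Ioc] with x hx
    exact AddCircle.liftIoc_coe_apply (by simpa using hx)
  have hGmem : MemLp G 2 (volume : Measure (AddCircle (1:ℝ))) := by
    rw [← hmp.map_eq]
    rw [memLp_map_measure_iff hGsm.aestronglyMeasurable hmp.measurable.aemeasurable]
    rw [show ((0:ℝ)+1) = 1 by norm_num]
    exact humem.ae_eq hGcomp.symm
  have hvol : (volume : Measure (AddCircle (1:ℝ))) = AddCircle.haarAddCircle := by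
    rw [AddCircle.volume_eq_smul_haarAddCircle]
    simp
  rw [hvol] at hGmem
  have hcoeff : ∀ n : ℤ, fourierCoeff G n = 0 := by
    intro n
    rw [hG, fourierCoeff_liftIoc_eq]
    rw [fourierCoeffOn_eq_integral]
    have heq : ∫ x in (0:ℝ)..(0+1), fourier (-n) (x : AddCircle ((0:ℝ)+1-0)) • u x
        = ∫ x in Set.Ioo (0:ℝ) 1, Complex.exp (-(lam n) * x) * (g : ℝ → ℂ) x := by
      rw [show ((0:ℝ)+1) = 1 by norm_num, show ((1:ℝ)-0) = 1 by norm_num]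
      rw [intervalIntegral.integral_of_le (by norm_num),
        MeasureTheory.integral_Ioc_eq_integral_Ioo]
      refine setIntegral_congr_fun measurableSet_Ioo (fun x hx => ?_)
      rw [fourier_coe_apply, hu]
      simp only [smul_eq_mul]
      rw [← mul_assoc, ← Complex.exp_add]
      congr 2
      unfold lam
      push_cast
      field_simp
      ring
    rw [heq, h n]
    simp
  have hrepr : fourierBasis.repr (hGmem.toLp G) = 0 := by
    ext n
    rw [fourierBasis_repr]
    have : fourierCoeff (hGmem.toLp G : AddCircle (1:ℝ) → ℂ) n = fourierCoeff G n := by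
      unfold fourierCoeff
      refine integral_congr_ae ?_
      filter_upwards [MemLp.coeFn_toLp hGmem] with t ht
      rw [ht]
    rw [this, hcoeff n]
    rfl
  have hGL0 : hGmem.toLp G = 0 := by
    have := (LinearIsometryEquiv.map_eq_zero_iff fourierBasis.repr).mp hrepr
    exact this
  have hG0 : G =ᵐ[(AddCircle.haarAddCircle : Measure (AddCircle (1:ℝ)))] 0 := by
    have h1 := MemLp.coeFn_toLp hGmem
    rw [hGL0] at h1
    exact h1.symm.trans (Lp.coeFn_zero _ _ _)
  -- pull back to the interval
  rw [← hvol] at hG0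
  rw [← hmp.map_eq] at hG0
  have hu0 : u =ᵐ[volume.restrict (Set.Ioc (0:ℝ) 1)] 0 := by
    have := (MeasureTheory.ae_eq_comp hmp.measurable.aemeasurable hG0 :
      (G ∘ ((↑) : ℝ → AddCircle (1:ℝ))) =ᵐ[volume.restrict (Set.Ioc (0:ℝ) (0+1))] 0)
    rw [show ((0:ℝ)+1) = 1 by norm_num] at this
    exact hGcomp.symm.trans this
  have hu0' : u =ᵐ[μ01] 0 := by rw [hres]; exact hu0
  have hg0 : (g : ℝ → ℂ) =ᵐ[μ01] 0 := by
    filter_upwards [hu0'] with x hx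
    simp only [hu, Pi.zero_apply] at hx ⊢
    rcases mul_eq_zero.mp hx with h' | h'
    · exact absurd h' (Complex.exp_ne_zero _)
    · exact h'
  exact (Lp.eq_zero_iff_ae_eq_zero).mpr hg0


lemma one_add_exp_one_ne_zero : (1 : ℂ) + Complex.exp 1 ≠ 0 := by
  have h : (0:ℝ) < (1 + Complex.exp 1).re := by
    rw [Complex.add_re, Complex.one_re, show (1:ℂ) = ((1:ℝ):ℂ) from Complex.ofReal_one.symm,
      ← Complex.ofReal_exp, Complex.ofReal_re]
    positivity
  intro hc
  rw [hc] at h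
  simp at h

lemma intOn (c : ℂ) (a b : ℝ) :
    IntegrableOn (fun t : ℝ => Complex.exp (c * t)) (Set.Ioo a b) volume :=
  ((Complex.continuous_exp.comp (continuous_const.mul Complex.continuous_ofReal)).integrableOn_Icc).mono_set
    Set.Ioo_subset_Icc_self

lemma integral_exp_Ioo (c : ℂ) (hc : c ≠ 0) {a b : ℝ} (hab : a ≤ b) :
    ∫ t in Set.Ioo a b, Complex.exp (c * t) =
      (Complex.exp (c * b) - Complex.exp (c * a)) / c := by
  rw [← MeasureTheory.integral_Ioc_eq_integral_Ioo, ← intervalIntegral.integral_of_le hab,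
    integral_exp_mul_complex hc]

theorem eigen (T : Lp ℂ 2 μ01 →L[ℂ] Lp ℂ 2 μ01)
    (hT : ∀ f : Lp ℂ 2 μ01,
      ∀ᵐ x ∂μ01,
        (T f : ℝ → ℂ) x =
          (∫ t in Set.Ioo (0:ℝ) x, (1 - Complex.exp ((t : ℂ) - (x : ℂ))) * (f : ℝ → ℂ) t) -
          (1 / 2 : ℂ) * (∫ t in Set.Ioo (0:ℝ) 1, (f : ℝ → ℂ) t) +
          (Complex.exp (1 - (x : ℂ)) / (1 + Complex.exp 1)) *
            (∫ t in Set.Ioo (0:ℝ) 1, Complex.exp ((t : ℂ) - 1) * (f : ℝ → ℂ) t))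
    (k : ℤ) : T (eL k) = mu k • eL k := by
  have hl := lam_ne_zero k
  have hl1 := one_add_lam_ne_zero k
  have hek : (eL k : ℝ → ℂ) =ᵐ[μ01] fun x : ℝ => Complex.exp (lam k * x) := MemLp.coeFn_toLp (ek_memℒp k)
  have hA : ∫ t in Set.Ioo (0:ℝ) 1, (eL k : ℝ → ℂ) t = (Complex.exp (lam k) - 1) / lam k := by
    rw [integral_congr_ae hek, integral_exp_Ioo _ hl zero_le_one]
    norm_num
  have hB : ∫ t in Set.Ioo (0:ℝ) 1, Complex.exp ((t:ℂ) - 1) * (eL k : ℝ → ℂ) t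
      = Complex.exp (-1) * ((Complex.exp (1 + lam k) - 1) / (1 + lam k)) := by
    have : (fun t : ℝ => Complex.exp ((t:ℂ) - 1) * (eL k : ℝ → ℂ) t)
        =ᵐ[μ01] fun t : ℝ => Complex.exp (-1) * Complex.exp ((1 + lam k) * t) := by
      filter_upwards [hek] with t ht
      rw [ht, ← Complex.exp_add, ← Complex.exp_add]
      congr 1
      ring
    rw [integral_congr_ae this, MeasureTheory.integral_const_mul,
      integral_exp_Ioo _ hl1 zero_le_one]
    norm_num
  refine Lp.ext ?_
  filter_upwards [hT (eL k), Lp.coeFn_smul (mu k) (eL k), hek,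
    ae_restrict_mem measurableSet_Ioo] with x hx hsmul hekx hmem
  have hCint : ∫ t in Set.Ioo (0:ℝ) x, (1 - Complex.exp ((t:ℂ) - (x:ℂ))) * (eL k : ℝ → ℂ) t
      = (Complex.exp (lam k * x) - 1) / lam k
        - Complex.exp (-(x:ℂ)) * ((Complex.exp ((1 + lam k) * x) - 1) / (1 + lam k)) := by
    have hsub : Set.Ioo (0:ℝ) x ⊆ Set.Ioo (0:ℝ) 1 := Set.Ioo_subset_Ioo_right hmem.2.le
    have hcong : (fun t : ℝ => (1 - Complex.exp ((t:ℂ) - (x:ℂ))) * (eL k : ℝ → ℂ) t)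
        =ᵐ[volume.restrict (Set.Ioo (0:ℝ) x)]
        fun t : ℝ => Complex.exp (lam k * t)
          - Complex.exp (-(x:ℂ)) * Complex.exp ((1 + lam k) * t) := by
      filter_upwards [ae_restrict_of_ae_restrict_of_subset hsub hek] with t ht
      rw [ht, sub_mul, one_mul, ← Complex.exp_add, ← Complex.exp_add]
      congr 2
      ring
    rw [integral_congr_ae hcong,
      MeasureTheory.integral_sub (intOn _ _ _) ((intOn (1 + lam k) 0 x).const_mul _),
      MeasureTheory.integral_const_mul, integral_exp_Ioo _ hl hmem.1.le,
      integral_exp_Ioo _ hl1 hmem.1.le]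
    norm_num
  rw [hx, hsmul, hCint, hA, hB]
  simp only [Pi.smul_apply, smul_eq_mul]
  rw [hekx]
  rw [Complex.exp_add (1 : ℂ) (lam k), exp_lam,
    show ((1 + lam k) * (x:ℂ)) = (x:ℂ) + lam k * x by ring, Complex.exp_add,
    Complex.exp_neg, Complex.exp_sub,
    show (Complex.exp (-1 : ℂ)) = (Complex.exp 1)⁻¹ by rw [← Complex.exp_neg]]
  unfold mu
  rw [show lam k ^ 2 + lam k = lam k * (1 + lam k) by ring]
  have hex := Complex.exp_ne_zero (x:ℂ)
  have he1 := Complex.exp_ne_zero (1:ℂ)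
  have h1e := one_add_exp_one_ne_zero
  field_simp
  ring
local notation "⟪" x ", " y "⟫" => @inner ℂ _ _ x y

lemma conj_lam (k : ℤ) : (starRingEnd ℂ) (lam k) = -lam k := by
  unfold lam
  rw [map_mul, Complex.conj_ofReal, Complex.conj_I]
  ring

lemma inner_eL_eq (k : ℤ) (g : Lp ℂ 2 μ01) :
    ⟪eL k, g⟫ = ∫ x in Set.Ioo (0:ℝ) 1, Complex.exp (-(lam k) * x) * (g : ℝ → ℂ) x := by
  rw [MeasureTheory.L2.inner_def]
  refine integral_congr_ae ?_
  have hek : (eL k : ℝ → ℂ) =ᵐ[μ01] fun x : ℝ => Complex.exp (lam k * x) :=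
    MemLp.coeFn_toLp (ek_memℒp k)
  filter_upwards [hek] with x hx
  rw [RCLike.inner_apply, hx, ← Complex.exp_conj, map_mul, conj_lam,
    Complex.conj_ofReal, mul_comm]

lemma orth {j k : ℤ} (h : j ≠ k) : ⟪eL j, eL k⟫ = 0 := by
  rw [inner_eL_eq]
  have hek : (eL k : ℝ → ℂ) =ᵐ[μ01] fun x : ℝ => Complex.exp (lam k * x) :=
    MemLp.coeFn_toLp (ek_memℒp k)
  have hcong : (fun x : ℝ => Complex.exp (-(lam j) * x) * (eL k : ℝ → ℂ) x)
      =ᵐ[μ01] fun x : ℝ => Complex.exp ((lam k - lam j) * x) := by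
    filter_upwards [hek] with x hx
    rw [hx, ← Complex.exp_add]
    congr 1
    ring
  have hne : lam k - lam j ≠ 0 := by
    unfold lam
    intro hc
    rw [← sub_mul, ← Complex.ofReal_sub, mul_eq_zero] at hc
    rcases hc with hc | hc
    · rw [Complex.ofReal_eq_zero] at hc
      have : (Real.pi) * (2*(k:ℝ)+1) - Real.pi * (2*(j:ℝ)+1) = 2*Real.pi*((k:ℝ)-(j:ℝ)) := by ring
      rw [this, mul_eq_zero] at hc
      rcases hc with hc | hc
      · exact absurd hc (by positivity)
      · have : (k:ℝ) = (j:ℝ) := by linarith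
        exact h (by exact_mod_cast this.symm)
    · exact Complex.I_ne_zero hc
  rw [integral_congr_ae hcong, integral_exp_Ioo _ hne zero_le_one]
  have : Complex.exp ((lam k - lam j) * (1:ℝ)) = 1 := by
    push_cast
    rw [mul_one]
    have : lam k - lam j = ((k - j : ℤ) : ℂ) * (2 * Real.pi * Complex.I) := by
      unfold lam
      push_cast
      ring
    rw [this, Complex.exp_int_mul_two_pi_mul_I]
  rw [this]
  norm_num

lemma tot {g : Lp ℂ 2 μ01} (h : ∀ k : ℤ, ⟪eL k, g⟫ = 0) : g = 0 :=
  totality fun k => (inner_eL_eq k g).symm.trans (h k)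

theorem main (T : Lp ℂ 2 μ01 →L[ℂ] Lp ℂ 2 μ01)
    (heig : ∀ k, T (eL k) = mu k • eL k) :
    T.comp (ContinuousLinearMap.adjoint T) = (ContinuousLinearMap.adjoint T).comp T := by
  have hadj : ∀ k, (ContinuousLinearMap.adjoint T) (eL k)
      = (starRingEnd ℂ) (mu k) • eL k := by
    intro k
    have h0 : ∀ j, ⟪eL j, (ContinuousLinearMap.adjoint T) (eL k)
        - (starRingEnd ℂ) (mu k) • eL k⟫ = 0 := by
      intro j
      rw [inner_sub_right, ContinuousLinearMap.adjoint_inner_right, heig j, inner_smul_left,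
        inner_smul_right]
      rcases eq_or_ne j k with rfl | hjk
      · ring
      · rw [orth hjk]; ring
    have := tot h0
    rwa [sub_eq_zero] at this
  have key : ∀ (f : Lp ℂ 2 μ01) (j : ℤ), ⟪eL j, T f⟫ = mu j * ⟪eL j, f⟫ := by
    intro f j
    rw [← ContinuousLinearMap.adjoint_inner_left, hadj j, inner_smul_left, RCLike.conj_conj]
  have key2 : ∀ (f : Lp ℂ 2 μ01) (j : ℤ),
      ⟪eL j, (ContinuousLinearMap.adjoint T) f⟫ = (starRingEnd ℂ) (mu j) * ⟪eL j, f⟫ := by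
    intro f j
    rw [ContinuousLinearMap.adjoint_inner_right, heig j, inner_smul_left]
  refine ContinuousLinearMap.ext fun f => ?_
  have h0 : ∀ j, ⟪eL j, (T.comp (ContinuousLinearMap.adjoint T)) f
      - ((ContinuousLinearMap.adjoint T).comp T) f⟫ = 0 := by
    intro j
    rw [inner_sub_right, ContinuousLinearMap.comp_apply, ContinuousLinearMap.comp_apply,
      key _ j, key2 _ j, key2 _ j, key _ j]
    ring
  have := tot h0
  rwa [sub_eq_zero] at this

end
end StmtAux16

open StmtAux16 in
/-- The bounded operator `T` on `L²(0,1)` given by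
`(Tf)(x) = ∫₀ˣ (1 - e^{t-x}) f(t) dt - (1/2)∫₀¹ f(t) dt
  + (e^{1-x}/(1+e)) ∫₀¹ e^{t-1} f(t) dt`
is normal: `T T* = T* T`. -/
theorem integral_operator_is_normal
    (T : Lp ℂ 2 (volume.restrict (Set.Ioo (0:ℝ) 1)) →L[ℂ]
         Lp ℂ 2 (volume.restrict (Set.Ioo (0:ℝ) 1)))
    (hT : ∀ f : Lp ℂ 2 (volume.restrict (Set.Ioo (0:ℝ) 1)),
      ∀ᵐ x ∂(volume.restrict (Set.Ioo (0:ℝ) 1)),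
        (T f : ℝ → ℂ) x =
          (∫ t in Set.Ioo (0:ℝ) x, (1 - Complex.exp ((t : ℂ) - (x : ℂ))) * (f : ℝ → ℂ) t) -
          (1 / 2 : ℂ) * (∫ t in Set.Ioo (0:ℝ) 1, (f : ℝ → ℂ) t) +
          (Complex.exp (1 - (x : ℂ)) / (1 + Complex.exp 1)) *
            (∫ t in Set.Ioo (0:ℝ) 1, Complex.exp ((t : ℂ) - 1) * (f : ℝ → ℂ) t)) :
    T.comp (ContinuousLinearMap.adjoint T) = (ContinuousLinearMap.adjoint T).comp T :=
  StmtAux16.main T (StmtAux16.eigen T hT)
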